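/- For n ≥ 5, the braid group B_n is strongly non-indicable: it contains a nontrivial finitely generated perfect subgroup (namely its commutator subgroup [B_n, B_n]). -/

import Mathlib

/-- The braid relations on generators indexed by `Fin (n-1)` (0-indexed: generator `i`
corresponds to the standard generator `σ_{i+1}`). -/
def braidRels (n : ℕ) : Set (FreeGroup (Fin (n - 1))) :=
  {r | (∃ i j : Fin (n - 1), (i : ℕ) + 1 = (j : ℕ) ∧
          r = FreeGroup.of i * FreeGroup.of j * FreeGroup.of i *
              (FreeGroup.of j * FreeGroup.of i * FreeGroup.of j)⁻¹) ∨
       (∃ i j : Fin (n - 1), (i : ℕ) + 2 ≤ (j : ℕ) ∧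
          r = FreeGroup.of i * FreeGroup.of j * (FreeGroup.of j * FreeGroup.of i)⁻¹)}

/-- The braid group `B_n`, presented by the standard generators and braid relations. -/
def BraidGroup (n : ℕ) : Type := PresentedGroup (braidRels n)

instance (n : ℕ) : Group (BraidGroup n) := by unfold BraidGroup; infer_instance

/-- The standard generator `σ_{i+1}` of `B_n` (0-indexed). -/
def braidGen (n : ℕ) (i : Fin (n - 1)) : BraidGroup n := PresentedGroup.of i

namespace BraidPf

open scoped commutatorElement

variable {n : ℕ}

lemma rel_one {r : FreeGroup (Fin (n-1))} (hr : r ∈ braidRels n) :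
    PresentedGroup.mk (braidRels n) r = 1 := by
  exact (QuotientGroup.eq_one_iff _).mpr (Subgroup.subset_normalClosure hr)

lemma braid1 (i j : Fin (n-1)) (h : (i:ℕ) + 1 = j) :
    braidGen n i * braidGen n j * braidGen n i = braidGen n j * braidGen n i * braidGen n j := by
  have h1 : PresentedGroup.mk (braidRels n)
      (FreeGroup.of i * FreeGroup.of j * FreeGroup.of i *
        (FreeGroup.of j * FreeGroup.of i * FreeGroup.of j)⁻¹) = 1 :=
    rel_one (Or.inl ⟨i, j, h, rfl⟩)
  simp only [map_mul, map_inv, mul_inv_rev, inv_inv] at h1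
  have := mul_inv_eq_one.mp (by rw [← mul_inv_rev, ← mul_inv_rev] at h1; exact h1)
  exact this

lemma braid2 (i j : Fin (n-1)) (h : (i:ℕ) + 2 ≤ j) :
    braidGen n i * braidGen n j = braidGen n j * braidGen n i := by
  have h1 : PresentedGroup.mk (braidRels n)
      (FreeGroup.of i * FreeGroup.of j * (FreeGroup.of j * FreeGroup.of i)⁻¹) = 1 :=
    rel_one (Or.inr ⟨i, j, h, rfl⟩)
  simp only [map_mul, map_inv, mul_inv_rev, inv_inv] at h1
  have := mul_inv_eq_one.mp (by rw [← mul_inv_rev] at h1; exact h1)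
  exact this

/-- total version of the generators -/
def sfun (n : ℕ) (k : ℕ) : BraidGroup n :=
  if h : k < n - 1 then braidGen n ⟨k, h⟩ else 1

lemma sfun_eq (k : ℕ) (h : k < n - 1) : sfun n k = braidGen n ⟨k, h⟩ := dif_pos h

lemma sbraid1 (k : ℕ) (h : k + 1 < n - 1) :
    sfun n k * sfun n (k+1) * sfun n k = sfun n (k+1) * sfun n k * sfun n (k+1) := by
  rw [sfun_eq k (by omega), sfun_eq (k+1) h]
  exact braid1 _ _ rfl

lemma sbraid2 (k l : ℕ) (h : k + 2 ≤ l) (hl : l < n - 1) :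
    sfun n k * sfun n l = sfun n l * sfun n k := by
  rw [sfun_eq k (by omega), sfun_eq l hl]
  exact braid2 _ _ h


namespace Core

variable {n : ℕ}

/-- `a k = σ_k σ_0⁻¹` -/
def aa (n : ℕ) (k : ℕ) : BraidGroup n := sfun n k * (sfun n 0)⁻¹

/-- `b = σ_0 a_1 σ_0⁻¹` -/
def bb (n : ℕ) : BraidGroup n := sfun n 0 * aa n 1 * (sfun n 0)⁻¹

def SS (n : ℕ) : Set (BraidGroup n) := insert (bb n) (aa n '' Set.Iio (n-1))

def KK (n : ℕ) : Subgroup (BraidGroup n) := Subgroup.closure (SS n)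

lemma h01 (hn : 5 ≤ n) : sfun n 0 * sfun n 1 * sfun n 0 = sfun n 1 * sfun n 0 * sfun n 1 :=
  sbraid1 0 (by omega)

lemma h12 (hn : 5 ≤ n) : sfun n 1 * sfun n 2 * sfun n 1 = sfun n 2 * sfun n 1 * sfun n 2 :=
  sbraid1 1 (by omega)

lemma hc0k (k : ℕ) (hk : 2 ≤ k) : Commute (sfun n 0) (sfun n k) := by
  by_cases h : k < n - 1
  · exact sbraid2 0 k (by omega) h
  · show _ = _
    rw [show sfun n k = 1 from dif_neg h]
    simp

lemma hc13 (hn : 5 ≤ n) : Commute (sfun n 1) (sfun n 3) :=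
  sbraid2 1 3 (by omega) (by omega)

lemma aa_zero : aa n 0 = 1 := by unfold aa; group

lemma c1 (k : ℕ) (hk : 2 ≤ k) : sfun n 0 * aa n k * (sfun n 0)⁻¹ = aa n k := by
  unfold aa
  calc sfun n 0 * (sfun n k * (sfun n 0)⁻¹) * (sfun n 0)⁻¹
      = (sfun n 0 * sfun n k) * ((sfun n 0)⁻¹ * (sfun n 0)⁻¹) := by group
    _ = (sfun n k * sfun n 0) * ((sfun n 0)⁻¹ * (sfun n 0)⁻¹) := by rw [(hc0k k hk).eq]
    _ = sfun n k * (sfun n 0)⁻¹ := by group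

lemma c1' (k : ℕ) (hk : 2 ≤ k) : (sfun n 0)⁻¹ * aa n k * sfun n 0 = aa n k := by
  have h := c1 (n := n) k hk
  calc (sfun n 0)⁻¹ * aa n k * sfun n 0
      = (sfun n 0)⁻¹ * (sfun n 0 * aa n k * (sfun n 0)⁻¹) * sfun n 0 := by rw [h]
    _ = aa n k := by group

lemma c4 : (sfun n 0)⁻¹ * bb n * sfun n 0 = aa n 1 := by unfold bb; group

lemma c3 (hn : 5 ≤ n) : (sfun n 0)⁻¹ * aa n 1 * sfun n 0 = aa n 1 * (bb n)⁻¹ := by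
  unfold aa bb
  calc (sfun n 0)⁻¹ * (sfun n 1 * (sfun n 0)⁻¹) * sfun n 0
      = (sfun n 0)⁻¹ * (sfun n 1 * sfun n 0 * sfun n 1) * ((sfun n 1)⁻¹ * (sfun n 0)⁻¹) := by
        group
    _ = (sfun n 0)⁻¹ * (sfun n 0 * sfun n 1 * sfun n 0) * ((sfun n 1)⁻¹ * (sfun n 0)⁻¹) := by
        rw [h01 hn]
    _ = sfun n 1 * (sfun n 0)⁻¹ * (sfun n 0 * (sfun n 1 * (sfun n 0)⁻¹) * (sfun n 0)⁻¹)⁻¹ := by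
        group

lemma c5 (hn : 5 ≤ n) : sfun n 0 * bb n * (sfun n 0)⁻¹ = (aa n 1)⁻¹ * bb n := by
  unfold aa bb
  calc sfun n 0 * (sfun n 0 * (sfun n 1 * (sfun n 0)⁻¹) * (sfun n 0)⁻¹) * (sfun n 0)⁻¹
      = (sfun n 0 * (sfun n 1)⁻¹) * (sfun n 1 * sfun n 0 * sfun n 1) *
          ((sfun n 0)⁻¹ * (sfun n 0)⁻¹ * (sfun n 0)⁻¹) := by group
    _ = (sfun n 0 * (sfun n 1)⁻¹) * (sfun n 0 * sfun n 1 * sfun n 0) *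
          ((sfun n 0)⁻¹ * (sfun n 0)⁻¹ * (sfun n 0)⁻¹) := by rw [h01 hn]
    _ = (sfun n 1 * (sfun n 0)⁻¹)⁻¹ * (sfun n 0 * (sfun n 1 * (sfun n 0)⁻¹) * (sfun n 0)⁻¹) := by
        group

lemma E1 (hn : 5 ≤ n) : aa n 1 * aa n 3 = aa n 3 * bb n := by
  unfold aa bb
  calc sfun n 1 * (sfun n 0)⁻¹ * (sfun n 3 * (sfun n 0)⁻¹)
      = sfun n 1 * ((sfun n 0)⁻¹ * sfun n 3) * (sfun n 0)⁻¹ := by group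
    _ = sfun n 1 * (sfun n 3 * (sfun n 0)⁻¹) * (sfun n 0)⁻¹ := by
        rw [((hc0k 3 (by omega)).inv_left).eq]
    _ = (sfun n 1 * sfun n 3) * ((sfun n 0)⁻¹ * (sfun n 0)⁻¹) := by group
    _ = (sfun n 3 * sfun n 1) * ((sfun n 0)⁻¹ * (sfun n 0)⁻¹) := by rw [(hc13 hn).eq]
    _ = sfun n 3 * (sfun n 0)⁻¹ * (sfun n 0 * (sfun n 1 * (sfun n 0)⁻¹) * (sfun n 0)⁻¹) := by
        group

lemma h01c (hn : 5 ≤ n) :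
    (sfun n 1)⁻¹ * sfun n 0 * sfun n 1 = sfun n 0 * sfun n 1 * (sfun n 0)⁻¹ := by
  calc (sfun n 1)⁻¹ * sfun n 0 * sfun n 1
      = (sfun n 1)⁻¹ * (sfun n 0 * sfun n 1 * sfun n 0) * (sfun n 0)⁻¹ := by group
    _ = (sfun n 1)⁻¹ * (sfun n 1 * sfun n 0 * sfun n 1) * (sfun n 0)⁻¹ := by rw [h01 hn]
    _ = sfun n 0 * sfun n 1 * (sfun n 0)⁻¹ := by group

lemma E2 (hn : 5 ≤ n) :
    aa n 1 * aa n 2 * ((aa n 1)⁻¹ * bb n) = aa n 2 * bb n * aa n 2 := by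
  unfold aa bb
  calc sfun n 1 * (sfun n 0)⁻¹ * (sfun n 2 * (sfun n 0)⁻¹) *
        ((sfun n 1 * (sfun n 0)⁻¹)⁻¹ * (sfun n 0 * (sfun n 1 * (sfun n 0)⁻¹) * (sfun n 0)⁻¹))
      = sfun n 1 * ((sfun n 0)⁻¹ * sfun n 2) *
          ((sfun n 1)⁻¹ * sfun n 0 * sfun n 1 * ((sfun n 0)⁻¹ * (sfun n 0)⁻¹)) := by group
    _ = sfun n 1 * (sfun n 2 * (sfun n 0)⁻¹) *
          ((sfun n 1)⁻¹ * sfun n 0 * sfun n 1 * ((sfun n 0)⁻¹ * (sfun n 0)⁻¹)) := by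
        rw [((hc0k 2 (by omega)).inv_left).eq]
    _ = sfun n 1 * sfun n 2 * (sfun n 0)⁻¹ * ((sfun n 1)⁻¹ * sfun n 0 * sfun n 1) *
          ((sfun n 0)⁻¹ * (sfun n 0)⁻¹) := by group
    _ = sfun n 1 * sfun n 2 * (sfun n 0)⁻¹ * (sfun n 0 * sfun n 1 * (sfun n 0)⁻¹) *
          ((sfun n 0)⁻¹ * (sfun n 0)⁻¹) := by rw [h01c hn]
    _ = (sfun n 1 * sfun n 2 * sfun n 1) * ((sfun n 0)⁻¹ * ((sfun n 0)⁻¹ * (sfun n 0)⁻¹)) := by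
        group
    _ = (sfun n 2 * sfun n 1 * sfun n 2) * ((sfun n 0)⁻¹ * ((sfun n 0)⁻¹ * (sfun n 0)⁻¹)) := by
        rw [h12 hn]
    _ = sfun n 2 * sfun n 1 * ((sfun n 2 * (sfun n 0)⁻¹) * ((sfun n 0)⁻¹ * (sfun n 0)⁻¹)) := by
        group
    _ = sfun n 2 * sfun n 1 * (((sfun n 0)⁻¹ * sfun n 2) * ((sfun n 0)⁻¹ * (sfun n 0)⁻¹)) := by
        rw [((hc0k 2 (by omega)).inv_left).eq]
    _ = sfun n 2 * sfun n 1 * (sfun n 0)⁻¹ * ((sfun n 2 * (sfun n 0)⁻¹) * (sfun n 0)⁻¹) := by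
        group
    _ = sfun n 2 * sfun n 1 * (sfun n 0)⁻¹ * (((sfun n 0)⁻¹ * sfun n 2) * (sfun n 0)⁻¹) := by
        rw [((hc0k 2 (by omega)).inv_left).eq]
    _ = sfun n 2 * (sfun n 0)⁻¹ * (sfun n 0 * (sfun n 1 * (sfun n 0)⁻¹) * (sfun n 0)⁻¹) *
          (sfun n 2 * (sfun n 0)⁻¹) := by group

lemma E3 (k : ℕ) (hk : 2 ≤ k) (hk2 : k + 1 < n - 1) :
    aa n k * aa n (k+1) * aa n k = aa n (k+1) * aa n k * aa n (k+1) := by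
  have hb := sbraid1 (n := n) k hk2
  have e1 := ((hc0k (n := n) k hk).inv_left).eq
  have e2 := ((hc0k (n := n) (k+1) (by omega)).inv_left).eq
  unfold aa
  calc sfun n k * (sfun n 0)⁻¹ * (sfun n (k+1) * (sfun n 0)⁻¹) * (sfun n k * (sfun n 0)⁻¹)
      = sfun n k * ((sfun n 0)⁻¹ * sfun n (k+1)) * ((sfun n 0)⁻¹ * sfun n k) * (sfun n 0)⁻¹ := by
        group
    _ = sfun n k * (sfun n (k+1) * (sfun n 0)⁻¹) * ((sfun n 0)⁻¹ * sfun n k) * (sfun n 0)⁻¹ := by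
        rw [e2]
    _ = sfun n k * (sfun n (k+1) * (sfun n 0)⁻¹) * (sfun n k * (sfun n 0)⁻¹) * (sfun n 0)⁻¹ := by
        rw [e1]
    _ = sfun n k * sfun n (k+1) * ((sfun n 0)⁻¹ * sfun n k) * ((sfun n 0)⁻¹ * (sfun n 0)⁻¹) := by
        group
    _ = sfun n k * sfun n (k+1) * (sfun n k * (sfun n 0)⁻¹) * ((sfun n 0)⁻¹ * (sfun n 0)⁻¹) := by
        rw [e1]
    _ = (sfun n k * sfun n (k+1) * sfun n k) *
          ((sfun n 0)⁻¹ * ((sfun n 0)⁻¹ * (sfun n 0)⁻¹)) := by group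
    _ = (sfun n (k+1) * sfun n k * sfun n (k+1)) *
          ((sfun n 0)⁻¹ * ((sfun n 0)⁻¹ * (sfun n 0)⁻¹)) := by rw [hb]
    _ = sfun n (k+1) * sfun n k * (sfun n (k+1) * (sfun n 0)⁻¹) *
          ((sfun n 0)⁻¹ * (sfun n 0)⁻¹) := by group
    _ = sfun n (k+1) * sfun n k * ((sfun n 0)⁻¹ * sfun n (k+1)) *
          ((sfun n 0)⁻¹ * (sfun n 0)⁻¹) := by rw [← e2]
    _ = sfun n (k+1) * sfun n k * (sfun n 0)⁻¹ * (sfun n (k+1) * (sfun n 0)⁻¹) *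
          (sfun n 0)⁻¹ := by group
    _ = sfun n (k+1) * sfun n k * (sfun n 0)⁻¹ * ((sfun n 0)⁻¹ * sfun n (k+1)) *
          (sfun n 0)⁻¹ := by rw [← e2]
    _ = sfun n (k+1) * (sfun n k * (sfun n 0)⁻¹) * ((sfun n 0)⁻¹ * sfun n (k+1) *
          (sfun n 0)⁻¹) := by group
    _ = sfun n (k+1) * ((sfun n 0)⁻¹ * sfun n k) * ((sfun n 0)⁻¹ * sfun n (k+1) *
          (sfun n 0)⁻¹) := by rw [← e1]
    _ = sfun n (k+1) * (sfun n 0)⁻¹ * (sfun n k * (sfun n 0)⁻¹) *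
          (sfun n (k+1) * (sfun n 0)⁻¹) := by group


lemma aaK (k : ℕ) (hk : k < n - 1) : aa n k ∈ KK n :=
  Subgroup.subset_closure (Set.mem_insert_of_mem _ ⟨k, Set.mem_Iio.mpr hk, rfl⟩)

lemma bbK : bb n ∈ KK n := Subgroup.subset_closure (Set.mem_insert _ _)

lemma KmapP (hn : 5 ≤ n) : ∀ x ∈ KK n, sfun n 0 * x * (sfun n 0)⁻¹ ∈ KK n := by
  intro x hx
  induction hx using Subgroup.closure_induction with
  | mem y hy =>
    rcases hy with rfl | ⟨k, hk, rfl⟩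
    · rw [c5 hn]
      exact mul_mem (inv_mem (aaK 1 (by omega))) bbK
    · match k with
      | 0 => rw [aa_zero]; simpa using one_mem _
      | 1 => exact bbK
      | (m+2) => rw [c1 (m+2) (by omega)]; exact aaK _ (Set.mem_Iio.mp hk)
  | one => simpa using one_mem _
  | mul y z hy hz ihy ihz =>
    have h := mul_mem ihy ihz
    rwa [show sfun n 0 * y * (sfun n 0)⁻¹ * (sfun n 0 * z * (sfun n 0)⁻¹) =
         sfun n 0 * (y * z) * (sfun n 0)⁻¹ by group] at h
  | inv y hy ihy =>
    have h := inv_mem ihy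
    rwa [show (sfun n 0 * y * (sfun n 0)⁻¹)⁻¹ = sfun n 0 * y⁻¹ * (sfun n 0)⁻¹ by group] at h

lemma KmapM (hn : 5 ≤ n) : ∀ x ∈ KK n, (sfun n 0)⁻¹ * x * sfun n 0 ∈ KK n := by
  intro x hx
  induction hx using Subgroup.closure_induction with
  | mem y hy =>
    rcases hy with rfl | ⟨k, hk, rfl⟩
    · rw [c4]; exact aaK 1 (by omega)
    · match k with
      | 0 => rw [aa_zero]; simpa using one_mem _
      | 1 => rw [c3 hn]; exact mul_mem (aaK 1 (by omega)) (inv_mem bbK)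
      | (m+2) => rw [c1' (m+2) (by omega)]; exact aaK _ (Set.mem_Iio.mp hk)
  | one => simpa using one_mem _
  | mul y z hy hz ihy ihz =>
    have h := mul_mem ihy ihz
    rwa [show (sfun n 0)⁻¹ * y * sfun n 0 * ((sfun n 0)⁻¹ * z * sfun n 0) =
         (sfun n 0)⁻¹ * (y * z) * sfun n 0 by group] at h
  | inv y hy ihy =>
    have h := inv_mem ihy
    rwa [show ((sfun n 0)⁻¹ * y * sfun n 0)⁻¹ = (sfun n 0)⁻¹ * y⁻¹ * sfun n 0 by group] at h

lemma braid_closure :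
    Subgroup.closure (Set.range (braidGen n)) = (⊤ : Subgroup (BraidGroup n)) :=
  PresentedGroup.closure_range_of (braidRels n)

lemma braidGen_eq (i : Fin (n-1)) : braidGen n i = aa n i.val * sfun n 0 := by
  unfold aa
  rw [sfun_eq i.val i.isLt, Fin.eta]
  group

lemma sigma_mem_normalizer (hn : 5 ≤ n) : sfun n 0 ∈ Subgroup.normalizer (KK n : Set (BraidGroup n)) := by
  rw [Subgroup.mem_normalizer_iff]
  intro h
  constructor
  · exact fun hh => KmapP hn h hh
  · intro hh
    have h2 := KmapM hn _ hh
    rwa [show (sfun n 0)⁻¹ * (sfun n 0 * h * (sfun n 0)⁻¹) * sfun n 0 = h by group] at h2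

lemma Knormal (hn : 5 ≤ n) : (KK n).Normal := by
  rw [← Subgroup.normalizer_eq_top_iff, eq_top_iff, ← braid_closure, Subgroup.closure_le]
  rintro _ ⟨i, rfl⟩
  rw [braidGen_eq i]
  exact mul_mem (Subgroup.le_normalizer (aaK _ i.isLt)) (sigma_mem_normalizer hn)

lemma commutator_le_K (hn : 5 ≤ n) : commutator (BraidGroup n) ≤ KK n := by
  haveI := Knormal hn
  rw [commutator_def, Subgroup.commutator_le]
  intro g1 _ g2 _
  have hz : ∀ g : BraidGroup n, QuotientGroup.mk' (KK n) g ∈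
      Subgroup.zpowers (QuotientGroup.mk' (KK n) (sfun n 0)) := by
    intro g
    have htop : (⊤ : Subgroup (BraidGroup n)) ≤ Subgroup.comap (QuotientGroup.mk' (KK n))
        (Subgroup.zpowers (QuotientGroup.mk' (KK n) (sfun n 0))) := by
      rw [← braid_closure, Subgroup.closure_le]
      rintro _ ⟨i, rfl⟩
      simp only [SetLike.mem_coe, Subgroup.mem_comap]
      rw [braidGen_eq i, map_mul]
      rw [show QuotientGroup.mk' (KK n) (aa n i.val) = 1 from
        (QuotientGroup.eq_one_iff _).mpr (aaK _ i.isLt), one_mul]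
      exact Subgroup.mem_zpowers _
    exact Subgroup.mem_comap.mp (htop (Subgroup.mem_top g))
  obtain ⟨p, hp⟩ := hz g1
  obtain ⟨q, hq⟩ := hz g2
  refine (QuotientGroup.eq_one_iff _).mp ?_
  rw [show ((⁅g1, g2⁆ : BraidGroup n) : BraidGroup n ⧸ KK n)
      = QuotientGroup.mk' (KK n) ⁅g1, g2⁆ from rfl, map_commutatorElement]
  refine commutatorElement_eq_one_iff_commute.mpr ?_
  rw [← hp, ← hq]
  exact (Commute.refl _).zpow_zpow p q

lemma conj_w (k : ℕ) (hk : k < n - 1) : ∃ w : BraidGroup n, sfun n k = w * sfun n 0 * w⁻¹ := by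
  induction k with
  | zero => exact ⟨1, by group⟩
  | succ k ih =>
    obtain ⟨w, hw⟩ := ih (by omega)
    refine ⟨sfun n k * sfun n (k+1) * w, ?_⟩
    calc sfun n (k+1)
        = (sfun n k * sfun n (k+1) * sfun n k) * ((sfun n (k+1))⁻¹ * (sfun n k)⁻¹) := by
          rw [sbraid1 k hk]; group
      _ = (sfun n k * sfun n (k+1)) * sfun n k * (sfun n k * sfun n (k+1))⁻¹ := by group
      _ = (sfun n k * sfun n (k+1)) * (w * sfun n 0 * w⁻¹) * (sfun n k * sfun n (k+1))⁻¹ := by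
          rw [← hw]
      _ = (sfun n k * sfun n (k+1) * w) * sfun n 0 * (sfun n k * sfun n (k+1) * w)⁻¹ := by group

lemma K_le_commutator (hn : 5 ≤ n) : KK n ≤ commutator (BraidGroup n) := by
  rw [commutator_def]
  have haa : ∀ k, k < n - 1 → aa n k ∈ ⁅(⊤ : Subgroup (BraidGroup n)), (⊤ : Subgroup (BraidGroup n))⁆ := by
    intro k hk
    obtain ⟨w, hw⟩ := conj_w k hk
    have : aa n k = ⁅w, sfun n 0⁆ := by
      unfold aa; rw [hw, commutatorElement_def]
    rw [this]
    exact Subgroup.commutator_mem_commutator (Subgroup.mem_top w) (Subgroup.mem_top _)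
  refine (Subgroup.closure_le _).mpr ?_
  rintro x (rfl | ⟨k, hk, rfl⟩)
  · unfold bb
    exact (Subgroup.commutator_normal ⊤ ⊤).conj_mem _ (haa 1 (by omega)) (sfun n 0)
  · exact haa k (Set.mem_Iio.mp hk)

lemma K_eq (hn : 5 ≤ n) : commutator (BraidGroup n) = KK n :=
  le_antisymm (commutator_le_K hn) (K_le_commutator hn)


lemma perfect (hn : 5 ≤ n) : ⁅KK n, KK n⁆ = KK n := by
  haveI hN : (KK n).Normal := Knormal hn
  haveI hN2 : (⁅KK n, KK n⁆ : Subgroup (BraidGroup n)).Normal :=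
    Subgroup.commutator_normal (KK n) (KK n)
  apply le_antisymm
  · refine Subgroup.commutator_le.mpr fun g1 h1 g2 h2 => ?_
    rw [commutatorElement_def]
    exact mul_mem (mul_mem (mul_mem h1 h2) (inv_mem h1)) (inv_mem h2)
  · set π : BraidGroup n →* BraidGroup n ⧸ (⁅KK n, KK n⁆ : Subgroup (BraidGroup n)) :=
      QuotientGroup.mk' _ with hπ
    have hcomm : ∀ x ∈ KK n, ∀ y ∈ KK n, Commute (π x) (π y) := by
      intro x hx y hy
      have h1 : π ⁅x, y⁆ = 1 :=
        (QuotientGroup.eq_one_iff _).mpr (Subgroup.commutator_mem_commutator hx hy)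
      rw [map_commutatorElement] at h1
      exact commutatorElement_eq_one_iff_commute.mp h1
    have hA1B : π (aa n 1) = π (bb n) := by
      have hE1 := congrArg π (E1 hn)
      simp only [map_mul] at hE1
      have hc := hcomm (aa n 1) (aaK 1 (by omega)) (aa n 3) (aaK 3 (by omega))
      rw [hc.eq] at hE1
      exact mul_left_cancel hE1
    have hB : π (bb n) = 1 := by
      have h5 := congrArg π (c5 hn)
      simp only [map_mul, map_inv] at h5
      rw [hA1B, inv_mul_cancel] at h5
      calc π (bb n) = (π (sfun n 0))⁻¹ * (π (sfun n 0) * π (bb n) * (π (sfun n 0))⁻¹) *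
            π (sfun n 0) := by group
        _ = (π (sfun n 0))⁻¹ * 1 * π (sfun n 0) := by rw [h5]
        _ = 1 := by group
    have hA1 : π (aa n 1) = 1 := by rw [hA1B, hB]
    have hA2 : π (aa n 2) = 1 := by
      have h2 := congrArg π (E2 hn)
      simp only [map_mul, map_inv] at h2
      rw [hA1, hB] at h2
      simp only [one_mul, mul_one, inv_one] at h2
      exact (left_eq_mul.mp h2)
    have hAk : ∀ k, 2 ≤ k → k < n - 1 → π (aa n k) = 1 := by
      intro k hk
      induction k, hk using Nat.le_induction with
      | base => intro _; exact hA2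
      | succ k hk ih =>
        intro hlt
        have hp : π (aa n k) = 1 := ih (by omega)
        have h3 := congrArg π (E3 k hk hlt)
        simp only [map_mul] at h3
        rw [hp] at h3
        simp only [one_mul, mul_one] at h3
        exact left_eq_mul.mp h3
    refine (Subgroup.closure_le _).mpr ?_
    rintro x (rfl | ⟨k, hk, rfl⟩)
    · exact (QuotientGroup.eq_one_iff _).mp hB
    · match k with
      | 0 => rw [aa_zero]; exact one_mem _
      | 1 => exact (QuotientGroup.eq_one_iff _).mp hA1
      | (m+2) =>
        exact (QuotientGroup.eq_one_iff _).mp (hAk (m+2) (by omega) (Set.mem_Iio.mp hk))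


lemma swap_braid {α : Type*} [DecidableEq α] (x y z : α) (hxy : x ≠ y) (hyz : y ≠ z)
    (hxz : x ≠ z) :
    Equiv.swap x y * Equiv.swap y z * Equiv.swap x y =
      Equiv.swap y z * Equiv.swap x y * Equiv.swap y z := by
  have h1 : Equiv.swap y z * Equiv.swap x y * Equiv.swap y z = Equiv.swap z x :=
    Equiv.swap_mul_swap_mul_swap hxy hxz
  have h2 : Equiv.swap x y * Equiv.swap y z * Equiv.swap x y = Equiv.swap x z := by
    have h3 := Equiv.swap_mul_swap_mul_swap hyz.symm (Ne.symm hxz)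
    rwa [Equiv.swap_comm y x, Equiv.swap_comm z y] at h3
  rw [h1, h2]
  exact Equiv.swap_comm x z

lemma swap_commute {α : Type*} [DecidableEq α] (x y u v : α) (h1 : x ≠ u) (h2 : x ≠ v)
    (h3 : y ≠ u) (h4 : y ≠ v) :
    Equiv.swap x y * Equiv.swap u v = Equiv.swap u v * Equiv.swap x y := by
  ext t
  simp only [Equiv.Perm.mul_apply, Equiv.swap_apply_def]
  split_ifs <;> simp_all

def permGen (n : ℕ) : Fin (n-1) → Equiv.Perm (Fin n) := fun i =>
  Equiv.swap ⟨i.val, by have := i.isLt; omega⟩ ⟨i.val + 1, by have := i.isLt; omega⟩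

lemma perm_rels : ∀ r ∈ braidRels n, FreeGroup.lift (permGen n) r = 1 := by
  rintro r (⟨i, j, hij, rfl⟩ | ⟨i, j, hij, rfl⟩)
  · obtain ⟨iv, hiv⟩ := i
    obtain ⟨jv, hjv⟩ := j
    simp only at hij
    subst hij
    simp only [map_mul, map_inv, FreeGroup.lift_apply_of, permGen]
    rw [mul_inv_eq_one]
    exact swap_braid _ _ _ (by simp only [ne_eq, Fin.mk.injEq]; omega)
      (by simp only [ne_eq, Fin.mk.injEq]; omega) (by simp only [ne_eq, Fin.mk.injEq]; omega)
  · obtain ⟨iv, hiv⟩ := i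
    obtain ⟨jv, hjv⟩ := j
    simp only at hij
    simp only [map_mul, map_inv, FreeGroup.lift_apply_of, permGen]
    rw [mul_inv_eq_one]
    exact swap_commute _ _ _ _ (by simp only [ne_eq, Fin.mk.injEq]; omega)
      (by simp only [ne_eq, Fin.mk.injEq]; omega) (by simp only [ne_eq, Fin.mk.injEq]; omega)
      (by simp only [ne_eq, Fin.mk.injEq]; omega)

def ψ (n : ℕ) : BraidGroup n →* Equiv.Perm (Fin n) :=
  PresentedGroup.toGroup (perm_rels (n := n))

lemma ψ_gen (i : Fin (n-1)) : ψ n (braidGen n i) = permGen n i :=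
  PresentedGroup.toGroup.of _

lemma aa1_ne_one (hn : 5 ≤ n) : aa n 1 ≠ 1 := by
  intro h
  have h1 : sfun n 1 = sfun n 0 := by
    have := mul_inv_eq_one.mp h
    exact this
  have h2 : ψ n (sfun n 1) = ψ n (sfun n 0) := congrArg _ h1
  rw [sfun_eq 1 (by omega), sfun_eq 0 (by omega), ψ_gen, ψ_gen] at h2
  simp only [permGen] at h2
  have h3 := Equiv.ext_iff.mp h2 ⟨0, by omega⟩
  rw [Equiv.swap_apply_of_ne_of_ne (by simp only [ne_eq, Fin.mk.injEq]; omega)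
    (by simp only [ne_eq, Fin.mk.injEq]; omega), Equiv.swap_apply_left] at h3
  exact (by simp only [ne_eq, Fin.mk.injEq]; omega : (⟨0, by omega⟩ : Fin n) ≠ ⟨0+1, by omega⟩) h3

end Core
end BraidPf

/-- For `n ≥ 5`, the braid group `B_n` is strongly non-indicable: its commutator subgroup is a
nontrivial finitely generated perfect subgroup. -/
theorem braid_strongly_non_indicable (n : ℕ) (hn : 5 ≤ n) :
    commutator (BraidGroup n) ≠ ⊥ ∧ (commutator (BraidGroup n)).FG ∧
      ⁅commutator (BraidGroup n), commutator (BraidGroup n)⁆ = commutator (BraidGroup n) := by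
  rw [BraidPf.Core.K_eq hn]
  refine ⟨?_, ?_, BraidPf.Core.perfect hn⟩
  · intro hbot
    have h1 := BraidPf.Core.aaK (n := n) 1 (by omega)
    rw [hbot] at h1
    exact BraidPf.Core.aa1_ne_one hn (Subgroup.mem_bot.mp h1)
  · refine (Subgroup.fg_iff _).mpr ⟨BraidPf.Core.SS n, rfl, ?_⟩
    exact ((Set.finite_Iio _).image _).insert _
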